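/- Let Ω be a type, K, N ≥ 1 natural numbers, φ : Fin K → (Ω → ℂ) a linearly independent family of functions, and X : (Fin N → Fin K) → ℂ a tensor. Define f : (Fin N → Ω) → ℂ by f(r) = ∑_{k : Fin N → Fin K} X(k) · ∏_j φ_{k(j)}(r(j)). Then the least natural number p for which there exist functions ψ : Fin p → Fin N → (Ω → ℂ) with each ψ(i)(j) lying in the ℂ-span of {φ_1, …, φ_K} and f(r) = ∑_{i=1}^p ∏_j ψ(i)(j)(r(j)) for all r, equals the CP rank of X. -/
import Mathlib


open scoped BigOperators

/-- The CP (canonical polyadic) rank of an `N`-th order tensor of dimension `K` over `ℂ`: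
the least `p` such that the tensor is a sum of `p` elementary tensor products. -/
noncomputable def cpRank {N K : ℕ} (X : (Fin N → Fin K) → ℂ) : ℕ :=
  sInf {p : ℕ | ∃ x : Fin p → Fin N → Fin K → ℂ,
    ∀ k : Fin N → Fin K, X k = ∑ i, ∏ j, x i j (k j)}

/-- An `N`-th order tensor is antisymmetric if it changes sign under any permutation
of its indices according to the sign of the permutation. -/
def IsAntisymTensor {N K : ℕ} (X : (Fin N → Fin K) → ℂ) : Prop :=
  ∀ (π : Equiv.Perm (Fin N)) (k : Fin N → Fin K),
    X (k ∘ π) = ((Equiv.Perm.sign π : ℤ) : ℂ) * X k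

/-- The determinant tensor: `E ℓ = sgn ℓ` if `ℓ` is a permutation of `Fin N`, `0` otherwise. -/
noncomputable def detTensor (N : ℕ) : (Fin N → Fin N) → ℂ :=
  fun ℓ => ∑ π : Equiv.Perm (Fin N),
    if ℓ = ⇑π then ((Equiv.Perm.sign π : ℤ) : ℂ) else 0

/-- The basis antisymmetric tensor associated with `u : Fin N → Fin K`:
`E_u ℓ = sgn π` if `ℓ = u ∘ π` for a (necessarily unique, when `u` is injective)
permutation `π` of `Fin N`, and `0` otherwise. -/
noncomputable def basisTensor {N K : ℕ} (u : Fin N → Fin K) : (Fin N → Fin K) → ℂ :=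
  fun ℓ => ∑ π : Equiv.Perm (Fin N),
    if ℓ = u ∘ ⇑π then ((Equiv.Perm.sign π : ℤ) : ℂ) else 0

/-- A function on `N`-tuples is antisymmetric if it changes sign under any permutation
of its arguments according to the sign of the permutation. -/
def IsAntisymFun {N : ℕ} {Ω : Type*} (f : (Fin N → Ω) → ℂ) : Prop :=
  ∀ (π : Equiv.Perm (Fin N)) (r : Fin N → Ω),
    f (r ∘ π) = ((Equiv.Perm.sign π : ℤ) : ℂ) * f r

lemma expand_aux {Ω : Type*} {K N p : ℕ} (x : Fin p → Fin N → Fin K → ℂ)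
    (φ : Fin K → Ω → ℂ) (r : Fin N → Ω) :
    ∑ i, ∏ j, (∑ c, x i j c * φ c (r j))
      = ∑ k : Fin N → Fin K, (∑ i, ∏ j, x i j (k j)) * ∏ j, φ (k j) (r j) := by
  have h1 : ∀ i : Fin p, ∏ j, (∑ c, x i j c * φ c (r j))
      = ∑ k : Fin N → Fin K, ∏ j, x i j (k j) * φ (k j) (r j) := by
    intro i
    rw [Finset.prod_univ_sum]
    simp [Fintype.piFinset_univ]
  calc ∑ i, ∏ j, (∑ c, x i j c * φ c (r j))
      = ∑ i, ∑ k : Fin N → Fin K, ∏ j, x i j (k j) * φ (k j) (r j) :=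
        Finset.sum_congr rfl fun i _ => h1 i
    _ = ∑ k : Fin N → Fin K, ∑ i, ∏ j, x i j (k j) * φ (k j) (r j) := Finset.sum_comm
    _ = ∑ k : Fin N → Fin K, (∑ i, ∏ j, x i j (k j)) * ∏ j, φ (k j) (r j) := by
        refine Finset.sum_congr rfl fun k _ => ?_
        rw [Finset.sum_mul]
        exact Finset.sum_congr rfl fun i _ => Finset.prod_mul_distrib

lemma li_prod_fun {Ω : Type*} : ∀ (N : ℕ) {K : ℕ} (φ : Fin K → Ω → ℂ),
    LinearIndependent ℂ φ →
    LinearIndependent ℂ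
      (fun k : Fin N → Fin K => fun r : Fin N → Ω => ∏ j, φ (k j) (r j)) := by
  intro N
  induction N with
  | zero =>
    intro K φ hφ
    rw [Fintype.linearIndependent_iff]
    intro c hc k
    have := congrFun hc (fun j => absurd j.2 (by omega))
    simpa [Subsingleton.elim k default] using this
  | succ N ih =>
    intro K φ hφ
    rw [Fintype.linearIndependent_iff]
    intro c hc k
    -- pointwise
    have hpt : ∀ r : Fin (N+1) → Ω,
        ∑ kk : Fin (N+1) → Fin K, c kk * ∏ j, φ (kk j) (r j) = 0 := by
      intro r
      have := congrFun hc r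
      simpa using this
    have hsplit : ∀ (ω : Ω) (r' : Fin N → Ω),
        ∑ k₀ : Fin K,
          (∑ k' : Fin N → Fin K, c (Fin.cons k₀ k') * ∏ j : Fin N, φ (k' j) (r' j))
            * φ k₀ ω = 0 := by
      intro ω r'
      set R : Fin (N+1) → Ω := Fin.cons ω r' with hR
      have h := hpt R
      have he : ∑ q : Fin K × (Fin N → Fin K),
            c (Fin.cons q.1 q.2) * ∏ j, φ ((Fin.cons q.1 q.2 : Fin (N+1) → Fin K) j) (R j)
          = ∑ kk : Fin (N+1) → Fin K, c kk * ∏ j, φ (kk j) (R j) :=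
        Fintype.sum_equiv (Fin.consEquiv (fun _ : Fin (N+1) => Fin K)) _ _ (fun q => rfl)
      rw [← he, Fintype.sum_prod_type] at h
      rw [← h]
      refine Finset.sum_congr rfl fun k₀ _ => ?_
      rw [Finset.sum_mul]
      refine Finset.sum_congr rfl fun k' _ => ?_
      rw [Fin.prod_univ_succ]
      simp only [hR, Fin.cons_zero, Fin.cons_succ]
      ring
    -- coefficients vanish for each k₀
    have hcoef : ∀ (k₀ : Fin K) (r' : Fin N → Ω),
        ∑ k' : Fin N → Fin K, c (Fin.cons k₀ k') * ∏ j : Fin N, φ (k' j) (r' j) = 0 := by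
      intro k₀ r'
      have := Fintype.linearIndependent_iff.mp hφ
        (fun k₀ => ∑ k' : Fin N → Fin K, c (Fin.cons k₀ k') * ∏ j : Fin N, φ (k' j) (r' j))
        ?_ k₀
      · exact this
      · funext ω
        simpa using hsplit ω r'
    have htail : ∀ k₀ : Fin K, ∀ k' : Fin N → Fin K, c (Fin.cons k₀ k') = 0 := by
      intro k₀
      have := Fintype.linearIndependent_iff.mp (ih φ hφ)
        (fun k' => c (Fin.cons k₀ k')) ?_
      · exact this
      · funext r'
        simpa using hcoef k₀ r'
    have := htail (k 0) (Fin.tail k)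
    rwa [Fin.cons_self_tail] at this

theorem tpfRank_eq_cpRank {Ω : Type*} {K N : ℕ} (hK : 1 ≤ K) (hN : 1 ≤ N)
    (φ : Fin K → Ω → ℂ) (hφ : LinearIndependent ℂ φ)
    (X : (Fin N → Fin K) → ℂ) (f : (Fin N → Ω) → ℂ)
    (hf : ∀ r : Fin N → Ω, f r = ∑ k : Fin N → Fin K, X k * ∏ j, φ (k j) (r j)) :
    sInf {p : ℕ | ∃ ψ : Fin p → Fin N → Ω → ℂ,
        (∀ i j, ψ i j ∈ Submodule.span ℂ (Set.range φ)) ∧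
        ∀ r : Fin N → Ω, f r = ∑ i, ∏ j, ψ i j (r j)}
      = cpRank X := by
  have hset : {p : ℕ | ∃ ψ : Fin p → Fin N → Ω → ℂ,
        (∀ i j, ψ i j ∈ Submodule.span ℂ (Set.range φ)) ∧
        ∀ r : Fin N → Ω, f r = ∑ i, ∏ j, ψ i j (r j)}
      = {p : ℕ | ∃ x : Fin p → Fin N → Fin K → ℂ,
        ∀ k : Fin N → Fin K, X k = ∑ i, ∏ j, x i j (k j)} := by
    ext p
    constructor
    · rintro ⟨ψ, hspan, hψ⟩
      choose x hx using fun i j => (Submodule.mem_span_range_iff_exists_fun ℂ).mp (hspan i j)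
      refine ⟨x, fun k => ?_⟩
      set X' : (Fin N → Fin K) → ℂ := fun k => ∑ i, ∏ j, x i j (k j) with hX'
      have hzero : ∑ kk : Fin N → Fin K,
          (X kk - X' kk) • (fun r : Fin N → Ω => ∏ j, φ (kk j) (r j)) = 0 := by
        funext r
        have h1 : ∑ i, ∏ j, ψ i j (r j)
            = ∑ kk : Fin N → Fin K, X' kk * ∏ j, φ (kk j) (r j) := by
          rw [← expand_aux x φ r]
          refine Finset.sum_congr rfl fun i _ => Finset.prod_congr rfl fun j _ => ?_
          rw [← hx i j]
          simp
        have h2 : ∑ kk : Fin N → Fin K, X kk * ∏ j, φ (kk j) (r j)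
            = ∑ kk : Fin N → Fin K, X' kk * ∏ j, φ (kk j) (r j) := by
          rw [← h1, ← hψ r, hf r]
        simp only [Finset.sum_apply, Pi.smul_apply, smul_eq_mul, Pi.zero_apply, sub_mul,
          Finset.sum_sub_distrib]
        rw [h2, sub_self]
      have hk := Fintype.linearIndependent_iff.mp (li_prod_fun N φ hφ)
        (fun kk => X kk - X' kk) hzero k
      exact sub_eq_zero.mp hk
    · rintro ⟨x, hx⟩
      refine ⟨fun i j => ∑ c, x i j c • φ c,
        fun i j => Submodule.sum_mem _ fun c _ =>
          Submodule.smul_mem _ _ (Submodule.subset_span ⟨c, rfl⟩),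
        fun r => ?_⟩
      have h1 : ∑ i, ∏ j, (∑ c, x i j c • φ c) (r j)
          = ∑ i, ∏ j, ∑ c, x i j c * φ c (r j) := by
        simp
      rw [hf r, h1, expand_aux x φ r]
      exact Finset.sum_congr rfl fun k _ => by rw [hx k]
  rw [hset, cpRank]
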